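/- arXiv:1604.07396 — 2 statements merged into one kernel-verified Lean document; each statement's English description precedes it below -/
import Mathlib

section
/- If x_0 = 1 and x_n = f_{n+1}² (∑_{j=1}^{n} 1/(f_j f_{j+1}) + 1) for n ≥ 1, then the F̂-transform of x is the constant sequence e = (1,1,1,...), i.e. (f_n/f_{n+1}) x_n − (f_{n+1}/f_n) x_{n-1} = 1 for all n ≥ 1 and x_0 = 1. -/
open Filter Finset

noncomputable def fibR : ℕ → ℝ
  | 0 => 1
  | 1 => 1
  | (n + 2) => fibR (n + 1) + fibR n

noncomputable def Fhat (x : ℕ → ℝ) (n : ℕ) : ℝ :=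
  fibR n / fibR (n + 1) * x n - fibR (n + 1) / fibR n * (if n = 0 then 0 else x (n - 1))

noncomputable def Fbar (Λ : ℕ → ℝ) (x : ℕ → ℝ) (n : ℕ) : ℝ :=
  (1 / Λ n) * ∑ k ∈ Finset.range (n + 1),
    (Λ k - if k = 0 then 0 else Λ (k - 1)) *
      (fibR k / fibR (k + 1) * x k -
        fibR (k + 1) / fibR k * (if k = 0 then 0 else x (k - 1)))

lemma fibR_pos : ∀ n, 0 < fibR n
  | 0 => one_pos
  | 1 => one_pos
  | (n + 2) => by
      rw [fibR]
      exact add_pos (fibR_pos (n + 1)) (fibR_pos n)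

lemma fibR_ne_zero (n : ℕ) : fibR n ≠ 0 := (fibR_pos n).ne'

theorem fhat_eq_one (x : ℕ → ℝ) (hx0 : x 0 = 1)
    (hx : ∀ n, 1 ≤ n → x n =
      fibR (n + 1) ^ 2 * (∑ j ∈ Finset.Icc 1 n, 1 / (fibR j * fibR (j + 1)) + 1)) :
    ∀ n, Fhat x n = 1 := by
  intro n
  match n with
  | 0 => simp [Fhat, hx0, fibR]
  | 1 =>
    have h := hx 1 le_rfl
    simp only [Fhat, h, hx0]
    norm_num [fibR]
  | (n + 2) =>
    have h1 := hx (n + 2) (by omega)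
    have h2 := hx (n + 1) (by omega)
    have hs : ∑ j ∈ Finset.Icc 1 (n + 2), 1 / (fibR j * fibR (j + 1))
        = ∑ j ∈ Finset.Icc 1 (n + 1), 1 / (fibR j * fibR (j + 1))
          + 1 / (fibR (n + 2) * fibR (n + 3)) :=
      Finset.sum_Icc_succ_top (by omega) _
    simp only [Fhat, show n + 2 - 1 = n + 1 from rfl, if_neg (by omega : ¬ n + 2 = 0)]
    rw [h1, h2, hs]
    have ha := fibR_ne_zero (n + 2)
    have hb := fibR_ne_zero (n + 3)
    field_simp
    ring
end

section
/- Given y ∈ c₀, the sequence x defined by x_k = ∑_{j=0}^{k} ∑_{i=j-1}^{j} (−1)^{j−i} (λ_i y_i)/(λ_j − λ_{j-1}) · f_{k+1}²/(f_j f_{j+1}) satisfies F̄_n(x) = y_n for all n; hence x ∈ c₀^λ(F̂) and the transform F̄ : c₀^λ(F̂) → c₀ is surjective. -/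
open Filter Finset

theorem fbar_surjective_onto_c0 (Λ : ℕ → ℝ) (hmono : StrictMono Λ) (hpos : ∀ k, 0 < Λ k)
    (hlim : Tendsto Λ atTop atTop) (y : ℕ → ℝ) (hy : Tendsto y atTop (nhds 0))
    (x : ℕ → ℝ)
    (hx : ∀ k, x k = ∑ j ∈ Finset.range (k + 1),
      ((Λ j * y j - if j = 0 then 0 else Λ (j - 1) * y (j - 1)) /
          (Λ j - if j = 0 then 0 else Λ (j - 1))) *
        (fibR (k + 1) ^ 2 / (fibR j * fibR (j + 1)))) :
    (∀ n, Fbar Λ x n = y n) ∧ Tendsto (Fbar Λ x) atTop (nhds 0) := by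
  set a : ℕ → ℝ := fun j =>
    (Λ j * y j - if j = 0 then 0 else Λ (j - 1) * y (j - 1)) /
      (Λ j - if j = 0 then 0 else Λ (j - 1)) with ha
  set S : ℕ → ℝ := fun k => ∑ j ∈ Finset.range (k + 1), a j / (fibR j * fibR (j + 1)) with hS
  have hxS : ∀ k, x k = fibR (k + 1) ^ 2 * S k := by
    intro k
    rw [hx, hS, Finset.mul_sum]
    refine Finset.sum_congr rfl fun j _ => ?_
    ring
  have hdpos : ∀ k, (0:ℝ) < Λ k - if k = 0 then 0 else Λ (k - 1) := by
    intro k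
    cases k with
    | zero => simpa using hpos 0
    | succ m => simpa using sub_pos.mpr (hmono (Nat.lt_succ_self m))
  -- Fhat of x equals a
  have hFhat : ∀ k, fibR k / fibR (k + 1) * x k -
      fibR (k + 1) / fibR k * (if k = 0 then 0 else x (k - 1)) = a k := by
    intro k
    cases k with
    | zero =>
      simp only [if_pos rfl, mul_zero, sub_zero]
      rw [hxS]
      simp only [hS]
      rw [Finset.sum_range_one]
      have h0 : fibR 0 = 1 := rfl
      have h1 : fibR 1 = 1 := rfl
      simp [h0, h1]
    | succ m =>
      simp only [Nat.succ_ne_zero, if_false, Nat.succ_sub_one]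
      rw [hxS (m + 1), hxS m]
      have : S (m + 1) = S m + a (m + 1) / (fibR (m + 1) * fibR (m + 2)) := by
        simp only [hS]
        rw [Finset.sum_range_succ]
      rw [this]
      field_simp [fibR_ne_zero]
      ring
  have hterm : ∀ k, (Λ k - if k = 0 then 0 else Λ (k - 1)) *
      (fibR k / fibR (k + 1) * x k -
        fibR (k + 1) / fibR k * (if k = 0 then 0 else x (k - 1))) =
      Λ k * y k - if k = 0 then 0 else Λ (k - 1) * y (k - 1) := by
    intro k
    rw [hFhat k, ha]
    exact mul_div_cancel₀ _ (ne_of_gt (hdpos k))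
  have htel : ∀ n, ∑ k ∈ Finset.range (n + 1),
      (Λ k * y k - if k = 0 then 0 else Λ (k - 1) * y (k - 1)) = Λ n * y n := by
    intro n
    induction n with
    | zero => simp
    | succ m ih =>
      rw [Finset.sum_range_succ, ih]
      simp
  have hmain : ∀ n, Fbar Λ x n = y n := by
    intro n
    unfold Fbar
    rw [Finset.sum_congr rfl fun k _ => hterm k, htel n]
    field_simp [ne_of_gt (hpos n)]
  exact ⟨hmain, by rw [funext hmain]; exact hy⟩
end
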